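/- In the regular hexagonal tiling of the plane with edge length 1, there exists a point p ∈ ℝ² such that the closed disk closedBall(p, 1/2) intersects at least four tiles; that is, the bound of radius 1/2 is tight. (One may take p to be the midpoint of an edge shared by two hexagons.) -/

import Mathlib

open Metric Set

/-- The point `(x, y)` in the Euclidean plane. -/
noncomputable def pt (x y : ℝ) : EuclideanSpace ℝ (Fin 2) :=
  (WithLp.equiv 2 (Fin 2 → ℝ)).symm ![x, y]

/-- The closed regular hexagon with edge length 1 centered at the origin. -/
noncomputable def hexagon : Set (EuclideanSpace ℝ (Fin 2)) :=
  convexHull ℝ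
    {pt 1 0, pt (1 / 2) (Real.sqrt 3 / 2), pt (-(1 / 2)) (Real.sqrt 3 / 2), pt (-1) 0,
      pt (-(1 / 2)) (-(Real.sqrt 3 / 2)), pt (1 / 2) (-(Real.sqrt 3 / 2))}

/-- The tile `H_{m,n} = H + m·(3/2, √3/2) + n·(0, √3)` of the regular hexagonal tiling. -/
noncomputable def hexTile (m n : ℤ) : Set (EuclideanSpace ℝ (Fin 2)) :=
  (fun x => x + (m : ℝ) • pt (3 / 2) (Real.sqrt 3 / 2) + (n : ℝ) • pt 0 (Real.sqrt 3)) ''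
    hexagon

lemma pt_add (a b c d : ℝ) : pt a b + pt c d = pt (a+c) (b+d) := by
  ext i; fin_cases i <;> rfl

lemma pt_smul (r a b : ℝ) : r • pt a b = pt (r*a) (r*b) := by
  ext i; fin_cases i <;> rfl

lemma dist_pt (a b c d : ℝ) : dist (pt a b) (pt c d) = Real.sqrt ((a-c)^2+(b-d)^2) := by
  simp [EuclideanSpace.dist_eq, pt, Fin.sum_univ_two, Real.dist_eq, sq_abs]

lemma mem_hexTile_of (m n : ℤ) (vx vy : ℝ) (hv : pt vx vy ∈ hexagon) :
    pt (vx + m*(3/2)) (vy + m*(Real.sqrt 3/2) + n*Real.sqrt 3) ∈ hexTile m n :=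
  ⟨pt vx vy, hv, by simp only [pt_smul, pt_add]; congr 1 <;> ring⟩

lemma dist_le_half (x y : ℝ) (h : (x-3/4)^2 + (y - Real.sqrt 3/4)^2 ≤ 1/4) :
    dist (pt x y) (pt (3/4) (Real.sqrt 3/4)) ≤ 1/2 := by
  rw [dist_pt]
  calc Real.sqrt ((x-3/4)^2 + (y - Real.sqrt 3/4)^2) ≤ Real.sqrt (1/4) :=
        Real.sqrt_le_sqrt h
    _ = 1/2 := by
        rw [show (1/4:ℝ) = (1/2)^2 by norm_num, Real.sqrt_sq (by norm_num)]

/-- There is a point such that the closed disk of radius `1/2` around it intersects at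
least four tiles of the regular hexagonal tiling with edge length 1: the bound `1/2` is
tight. -/
theorem hexagonal_tiling_radius_half_is_tight :
    ∃ p : EuclideanSpace ℝ (Fin 2),
      4 ≤ {q : ℤ × ℤ | (hexTile q.1 q.2 ∩ closedBall p (1 / 2)).Nonempty}.encard := by
  have hs : Real.sqrt 3 ^ 2 = 3 := Real.sq_sqrt (by norm_num)
  refine ⟨pt (3/4) (Real.sqrt 3/4), ?_⟩
  have hv1 : pt (1/2) (Real.sqrt 3/2) ∈ hexagon :=
    subset_convexHull ℝ _ (by simp [Set.mem_insert_iff])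
  have hv2 : pt (-1) 0 ∈ hexagon :=
    subset_convexHull ℝ _ (by simp [Set.mem_insert_iff])
  have hv3 : pt (1/2) (-(Real.sqrt 3/2)) ∈ hexagon :=
    subset_convexHull ℝ _ (by
      have : -(Real.sqrt 3/2) = -(Real.sqrt 3)/2 := by ring
      simp [Set.mem_insert_iff, this])
  have hv4 : pt (-(1/2)) (Real.sqrt 3/2) ∈ hexagon :=
    subset_convexHull ℝ _ (by simp [Set.mem_insert_iff])
  have hS : ({((0:ℤ),(0:ℤ)), (1,0), (0,1), (1,-1)} : Set (ℤ × ℤ)) ⊆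
      {q : ℤ × ℤ | (hexTile q.1 q.2 ∩ closedBall (pt (3/4) (Real.sqrt 3/4)) (1 / 2)).Nonempty} := by
    intro q hq
    simp only [Set.mem_insert_iff, Set.mem_singleton_iff] at hq
    rcases hq with rfl | rfl | rfl | rfl
    · exact ⟨_, mem_hexTile_of 0 0 (1/2) (Real.sqrt 3/2) hv1,
        mem_closedBall.2 (dist_le_half _ _ (by push_cast; nlinarith [hs]))⟩
    · exact ⟨_, mem_hexTile_of 1 0 (-1) 0 hv2,
        mem_closedBall.2 (dist_le_half _ _ (by push_cast; nlinarith [hs]))⟩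
    · exact ⟨_, mem_hexTile_of 0 1 (1/2) (-(Real.sqrt 3/2)) hv3,
        mem_closedBall.2 (dist_le_half _ _ (by push_cast; nlinarith [hs]))⟩
    · exact ⟨_, mem_hexTile_of 1 (-1) (-(1/2)) (Real.sqrt 3/2) hv4,
        mem_closedBall.2 (dist_le_half _ _ (by push_cast; nlinarith [hs]))⟩
  have h4 : ({((0:ℤ),(0:ℤ)), (1,0), (0,1), (1,-1)} : Set (ℤ × ℤ)).encard = 4 := by
    rw [Set.encard_insert_of_notMem (by decide),
        Set.encard_insert_of_notMem (by decide),
        Set.encard_insert_of_notMem (by decide),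
        Set.encard_singleton]
    rfl
  calc (4 : ℕ∞) = _ := h4.symm
    _ ≤ _ := Set.encard_mono hS
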